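/- Let A ⊆ A' be a finite subintegral extension of noetherian commutative rings of prime characteristic p (i.e., A' is a finite A-module, the induced map Spec(A') → Spec(A) is bijective, and it induces isomorphisms on all residue fields). Then there exists m ≥ 0 such that x^(p^m) ∈ A for every x ∈ A'. -/

import Mathlib

/-- A ring homomorphism induces trivial residue field extensions: for every prime `P`
of the target, every element of the residue field at `P` can be written as a fraction
of elements coming from the residue field at the contracted prime.  (For quotients by
primes, which are domains, this says exactly that the induced map on residue fields,
i.e. fraction fields of the quotients, is an isomorphism.) -/
def ResidueFieldsTrivial {A A' : Type*} [CommRing A] [CommRing A'] (f : A →+* A') : Prop :=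
  ∀ (P : Ideal A'), P.IsPrime → ∀ x : A' ⧸ P,
    ∃ a b : A ⧸ (P.comap f), b ≠ 0 ∧
      Ideal.quotientMap P f le_rfl b * x = Ideal.quotientMap P f le_rfl a

/-- A ring homomorphism is subintegral if it is integral, induces a bijection on prime
spectra, and induces isomorphisms on all residue fields. -/
def RingHom.IsSubintegral {A A' : Type*} [CommRing A] [CommRing A'] (f : A →+* A') : Prop :=
  f.IsIntegral ∧
    Function.Bijective (fun P : PrimeSpectrum A' => PrimeSpectrum.comap f P) ∧
    ResidueFieldsTrivial f

section Aux

variable {A' : Type*} [CommRing A'] (A : Subring A')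

/-- The set `A + P` as a submodule over the subring `A`. -/
private def auxSub (P : Ideal A') : Submodule A A' where
  carrier := {x : A' | ∃ a : A, x - (a : A') ∈ P}
  add_mem' := by
    rintro x y ⟨a, ha⟩ ⟨c, hc⟩
    refine ⟨a + c, ?_⟩
    have : x + y - ((a + c : A) : A') = (x - (a : A')) + (y - (c : A')) := by
      push_cast; ring
    rw [this]; exact P.add_mem ha hc
  zero_mem' := ⟨0, by simp⟩
  smul_mem' := by
    rintro c x ⟨a, ha⟩
    refine ⟨c * a, ?_⟩
    have hsm : c • x = (c : A') * x := Algebra.smul_def c x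
    have : c • x - ((c * a : A) : A') = (c : A') * (x - (a : A')) := by
      rw [hsm]; push_cast; ring
    rw [this]; exact P.mul_mem_left _ ha

private lemma mem_auxSub {P : Ideal A'} {x : A'} :
    x ∈ auxSub A P ↔ ∃ a : A, x - (a : A') ∈ P := Iff.rfl

/-- There is a single "denominator" `b ∈ A`, outside a given prime `P₁`, such that
`b * x ∈ A + P₁` for every `x ∈ A'`. -/
private lemma exists_denominator [Module.Finite A A'] {P₁ : Ideal A'}
    (hP₁prime : P₁.IsPrime)
    (hres : ∀ e : A', ∃ b : A, (b : A') ∉ P₁ ∧ ∃ a : A, (b : A') * e - (a : A') ∈ P₁) :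
    ∃ b : A, (b : A') ∉ P₁ ∧ ∀ x : A', ∃ a : A, (b : A') * x - (a : A') ∈ P₁ := by
  classical
  choose bfun hbfun afun hafun using hres
  obtain ⟨s, hs⟩ : ∃ s : Finset A', Submodule.span A (↑s : Set A') = ⊤ :=
    Module.finite_def.mp ‹Module.Finite A A'›
  refine ⟨∏ e ∈ s, bfun e, ?_, ?_⟩
  · have hcoe : ((∏ e ∈ s, bfun e : A) : A') = ∏ e ∈ s, ((bfun e : A')) := by
      exact map_prod A.subtype bfun s
    rw [hcoe]
    intro hmem
    haveI := hP₁prime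
    obtain ⟨e, -, he⟩ := Ideal.IsPrime.prod_mem_iff.mp hmem
    exact hbfun e he
  · intro x
    have hx : x ∈ Submodule.span A (↑s : Set A') := by rw [hs]; trivial
    have hspan : Submodule.span A (↑s : Set A') ≤
        (auxSub A P₁).comap (LinearMap.mulLeft A ((∏ e ∈ s, bfun e : A) : A')) := by
      rw [Submodule.span_le]
      intro y hy
      show ((∏ e ∈ s, bfun e : A) : A') * y ∈ auxSub A P₁
      refine ⟨(∏ x ∈ s.erase y, bfun x) * afun y, ?_⟩
      have hfact : (∏ x ∈ s, bfun x : A) = bfun y * ∏ x ∈ s.erase y, bfun x :=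
        (Finset.mul_prod_erase s bfun hy).symm
      have hkey : ((∏ x ∈ s, bfun x : A) : A') * y
          - (((∏ x ∈ s.erase y, bfun x) * afun y : A) : A')
          = ((∏ x ∈ s.erase y, bfun x : A) : A') * ((bfun y : A') * y - (afun y : A')) := by
        rw [hfact]; push_cast; ring
      rw [hkey]
      exact Ideal.mul_mem_left _ _ (hafun y)
    exact (mem_auxSub A).mp (hspan hx)

end Aux

/-- Let `A ⊆ A'` be a finite subintegral extension of noetherian
commutative rings of prime characteristic `p`.  Then there exists `m` such that
`x ^ (p ^ m) ∈ A` for every `x ∈ A'`. -/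
theorem subintegral_pow_char_mem
    (p : ℕ) (hp : p.Prime)
    (A' : Type*) [CommRing A'] [IsNoetherianRing A'] [CharP A' p]
    (A : Subring A') (hAnoeth : IsNoetherianRing A)
    (hfin : Module.Finite A A')
    (hsub : (algebraMap A A').IsSubintegral) :
    ∃ m : ℕ, ∀ x : A', x ^ p ^ m ∈ A := by
  classical
  haveI : Fact p.Prime := ⟨hp⟩
  set f := algebraMap A A' with hf
  have key : ∀ J : Ideal A', ∃ m : ℕ, ∀ x : A', ∃ a : A, x ^ p ^ m - (a : A') ∈ J := by
    intro J
    refine IsNoetherian.induction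
      (P := fun J : Ideal A' => ∃ m : ℕ, ∀ x : A', ∃ a : A, x ^ p ^ m - (a : A') ∈ J)
      (fun J IH => ?_) J
    by_cases hJtop : J = ⊤
    · exact ⟨0, fun x => ⟨0, by simp [hJtop]⟩⟩
    by_cases hpth : ∃ t, t ∉ J ∧ t ^ p ∈ J
    · -- Frobenius case
      obtain ⟨t, htJ, htp⟩ := hpth
      have hlt : J < J ⊔ Ideal.span {t} :=
        lt_of_le_of_ne le_sup_left fun h => htJ (by
          rw [h]; exact Ideal.mem_sup_right (Ideal.mem_span_singleton_self t))
      obtain ⟨m, hm⟩ := IH _ hlt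
      refine ⟨m + 1, fun x => ?_⟩
      obtain ⟨a, ha⟩ := hm x
      rw [Submodule.mem_sup] at ha
      obtain ⟨j, hj, w, hw, hjw⟩ := ha
      obtain ⟨sc, hsc⟩ := Ideal.mem_span_singleton'.mp hw
      refine ⟨a ^ p, ?_⟩
      have hx : x ^ p ^ m = (a : A') + (j + w) := by linear_combination -hjw
      have hxp : x ^ p ^ (m + 1) = ((a : A') + (j + w)) ^ p := by
        rw [← hx, pow_succ, pow_mul]
      rw [hxp, add_pow_char, add_pow_char]
      have : (a : A') ^ p + (j ^ p + w ^ p) - ((a ^ p : A) : A') = j ^ p + w ^ p := by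
        push_cast; ring
      rw [this]
      refine Ideal.add_mem _ (Ideal.pow_mem_of_mem J hj p hp.pos) ?_
      have : w ^ p = sc ^ p * t ^ p := by rw [← hsc]; ring
      rw [this]
      exact Ideal.mul_mem_left _ _ htp
    · -- radical case
      have hrad : ∀ t, t ^ p ∈ J → t ∈ J := by
        intro t ht
        by_contra h
        exact hpth ⟨t, h, ht⟩
      have hdesc : ∀ (k : ℕ) (v : A'), v ^ p ^ k ∈ J → v ∈ J := by
        intro k
        induction k with
        | zero => intro v hv; simpa using hv
        | succ k ih =>
          intro v hv
          rw [pow_succ', pow_mul] at hv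
          exact hrad v (ih _ hv)
      have hradJ : Ideal.radical J = J := by
        refine le_antisymm ?_ Ideal.le_radical
        intro v hv
        obtain ⟨n, hn⟩ := Ideal.mem_radical_iff.mp hv
        rcases Nat.eq_zero_or_pos n with hn0 | hn0
        · exact absurd (Ideal.eq_top_of_isUnit_mem J (by simpa [hn0] using hn) isUnit_one) hJtop
        · refine hdesc n v ?_
          have hle : n ≤ p ^ n := (Nat.lt_pow_self (n := n) hp.one_lt).le
          have : p ^ n = n + (p ^ n - n) := (Nat.add_sub_cancel' hle).symm
          rw [this, pow_add]
          exact Ideal.mul_mem_right _ _ hn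
      -- minimal primes
      have hSfin : (Ideal.minimalPrimes J).Finite := by
        rw [Ideal.minimalPrimes_eq_comap]
        exact (minimalPrimes.finite_of_isNoetherianRing _).image _
      have hSne : (Ideal.minimalPrimes J).Nonempty := by
        obtain ⟨Mx, hMx, hJM⟩ := Ideal.exists_le_maximal J hJtop
        haveI := hMx.isPrime
        obtain ⟨P, hP, -⟩ := Ideal.exists_minimalPrimes_le hJM
        exact ⟨P, hP⟩
      obtain ⟨P₁, hP₁S, hP₁min'⟩ :=
        Set.Finite.exists_minimalFor (fun P : Ideal A' => P.comap f) _ hSfin hSne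
      have hP₁min : ∀ P ∈ Ideal.minimalPrimes J, P.comap f ≤ P₁.comap f →
          P₁.comap f = P.comap f := fun P hP h => le_antisymm (hP₁min' hP h) h
      haveI hP₁prime : P₁.IsPrime := hP₁S.1.1
      have hJP₁ : J ≤ P₁ := hP₁S.1.2
      -- residue field triviality at P₁, elementwise
      have hres : ∀ e : A', ∃ b : A, (b : A') ∉ P₁ ∧ ∃ a : A, (b : A') * e - (a : A') ∈ P₁ := by
        intro e
        obtain ⟨aq, bq, hbq, heq⟩ := hsub.2.2 P₁ hP₁prime (Ideal.Quotient.mk P₁ e)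
        obtain ⟨b, rfl⟩ := Ideal.Quotient.mk_surjective bq
        obtain ⟨a, rfl⟩ := Ideal.Quotient.mk_surjective aq
        refine ⟨b, ?_, a, ?_⟩
        · intro h
          exact hbq (Ideal.Quotient.eq_zero_iff_mem.mpr (show b ∈ P₁.comap f from h))
        · rw [Ideal.quotientMap_mk, Ideal.quotientMap_mk, ← map_mul] at heq
          exact (Ideal.Quotient.eq).mp heq
      obtain ⟨b, hbP, hbx⟩ := exists_denominator A hP₁prime hres
      -- prime avoidance: find u
      have hu : ∃ u : A, (u : A') ∉ P₁ ∧
          ∀ P ∈ Ideal.minimalPrimes J, P ≠ P₁ → (u : A') ∈ P := by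
        set F : Finset (Ideal A') := hSfin.toFinset.erase P₁ with hF
        by_cases hle : ∏ P ∈ F, P.comap f ≤ P₁.comap f
        · haveI : (P₁.comap f).IsPrime := Ideal.IsPrime.comap f
          obtain ⟨P, hPF, hPle⟩ := (Ideal.IsPrime.prod_le ‹_›).mp hle
          have hPS : P ∈ Ideal.minimalPrimes J := by
            have := Finset.mem_of_mem_erase hPF
            rwa [Set.Finite.mem_toFinset] at this
          haveI hPprime : P.IsPrime := hPS.1.1
          have hcomap_eq : P₁.comap f = P.comap f := hP₁min P hPS hPle
          have : (⟨P, hPprime⟩ : PrimeSpectrum A') = ⟨P₁, hP₁prime⟩ := by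
            apply hsub.2.1.1
            apply PrimeSpectrum.ext
            exact hcomap_eq.symm
          have : P = P₁ := congrArg PrimeSpectrum.asIdeal this
          exact absurd this (Finset.ne_of_mem_erase hPF)
        · obtain ⟨u, hu1, hu2⟩ := SetLike.not_le_iff_exists.mp hle
          refine ⟨u, hu2, ?_⟩
          intro P hPS hPne
          have hPF : P ∈ F := by
            rw [hF, Finset.mem_erase, Set.Finite.mem_toFinset]
            exact ⟨hPne, hPS⟩
          have h1 : (∏ P ∈ F, Ideal.comap f P) ≤ Ideal.comap f P :=
            le_trans Ideal.prod_le_inf (Finset.inf_le hPF)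
          exact SetLike.le_def.mp h1 hu1
      obtain ⟨u, huP, hu2⟩ := hu
      -- the conductor-type element t
      set t : A' := ((u * b : A) : A') with ht
      have htJ : t ∉ J := by
        intro htmem
        have : t ∈ P₁ := hJP₁ htmem
        rw [ht] at this
        push_cast at this
        rcases hP₁prime.mul_mem_iff_mem_or_mem.mp this with h | h
        · exact huP h
        · exact hbP h
      have ht2 : ∀ x : A', ∃ a : A, t * x - (a : A') ∈ J := by
        intro x
        obtain ⟨a, ha⟩ := hbx x
        refine ⟨u * a, ?_⟩
        have heq : t * x - ((u * a : A) : A') = (u : A') * ((b : A') * x - (a : A')) := by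
          rw [ht]; push_cast; ring
        rw [heq]
        have hmem : ∀ P ∈ Ideal.minimalPrimes J, (u : A') * ((b : A') * x - (a : A')) ∈ P := by
          intro P hPS
          by_cases hPP : P = P₁
          · subst hPP; exact Ideal.mul_mem_left _ _ ha
          · exact Ideal.mul_mem_right _ _ (hu2 P hPS hPP)
        have : (u : A') * ((b : A') * x - (a : A')) ∈ sInf (Ideal.minimalPrimes J) :=
          Submodule.mem_sInf.mpr hmem
        rwa [Ideal.sInf_minimalPrimes, hradJ] at this
      -- conclude via induction hypothesis
      have hlt : J < J ⊔ Ideal.span {t} :=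
        lt_of_le_of_ne le_sup_left fun h => htJ (by
          rw [h]; exact Ideal.mem_sup_right (Ideal.mem_span_singleton_self t))
      obtain ⟨m, hm⟩ := IH _ hlt
      refine ⟨m, fun x => ?_⟩
      obtain ⟨a, ha⟩ := hm x
      rw [Submodule.mem_sup] at ha
      obtain ⟨j, hj, w, hw, hjw⟩ := ha
      obtain ⟨sc, hsc⟩ := Ideal.mem_span_singleton'.mp hw
      obtain ⟨a₂, ha₂⟩ := ht2 sc
      refine ⟨a + a₂, ?_⟩
      have : x ^ p ^ m - ((a + a₂ : A) : A') = j + (t * sc - (a₂ : A')) := by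
        push_cast
        linear_combination -hjw - hsc
      rw [this]
      exact Ideal.add_mem _ hj ha₂
  obtain ⟨m, hm⟩ := key ⊥
  refine ⟨m, fun x => ?_⟩
  obtain ⟨a, ha⟩ := hm x
  rw [Ideal.mem_bot, sub_eq_zero] at ha
  rw [ha]
  exact a.2
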